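/- arXiv:1302.3092 — 7 statements merged into one kernel-verified Lean document; each statement's English description precedes it below -/
import Mathlib

section
/- If f is strongly convex with parameter σ₁ with respect to the norm ‖·‖₁ and has coordinate-wise Lipschitz gradient with constants L_i (so that f(u+Eⁱh_i) ≤ f(u) + ⟨∇_i f(u), h_i⟩ + (L_i/2)‖h_i‖² holds), then σ₁ ≤ 1. -/
open scoped RealInnerProductSpace

noncomputable abbrev FullSpace (M : ℕ) (n : Fin M → ℕ) :=
  PiLp 2 (fun i : Fin M => EuclideanSpace ℝ (Fin (n i)))

noncomputable def blockEmb {M : ℕ} {n : Fin M → ℕ} (i : Fin M)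
    (h : EuclideanSpace ℝ (Fin (n i))) : FullSpace M n :=
  (WithLp.equiv 2 _).symm (Pi.single i h)

noncomputable def norm1Sq {M : ℕ} {n : Fin M → ℕ} (L : Fin M → ℝ)
    (u : FullSpace M n) : ℝ := ∑ i, L i * ‖u i‖ ^ 2

/-- strong convexity w.r.t. `‖·‖₁` together with the block descent upper
bound forces `σ₁ ≤ 1` (assuming some block direction is nontrivial). -/
theorem sigma_one_le_one {M : ℕ} {n : Fin M → ℕ}
    (f : FullSpace M n → ℝ) (hf : Differentiable ℝ f)
    (L : Fin M → ℝ) (hL : ∀ i, 0 < L i)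
    (σ₁ : ℝ)
    (hsc : ∀ w v : FullSpace M n,
      f w ≥ f v + ⟪gradient f v, w - v⟫ + σ₁ / 2 * norm1Sq L (w - v))
    (hdesc : ∀ (i : Fin M) (u : FullSpace M n) (h : EuclideanSpace ℝ (Fin (n i))),
      f (u + blockEmb i h) ≤ f u + ⟪gradient f u i, h⟫ + L i / 2 * ‖h‖ ^ 2)
    (hnontriv : ∃ i : Fin M, 0 < n i) :
    σ₁ ≤ 1 := by
  obtain ⟨i, hi⟩ := hnontriv
  set h : EuclideanSpace ℝ (Fin (n i)) := EuclideanSpace.single ⟨0, hi⟩ 1 with hh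
  have hnorm : ‖h‖ = 1 := by simp [hh, EuclideanSpace.norm_single]
  have h1 := hsc (0 + blockEmb i h) 0
  have h2 := hdesc i 0 h
  have hsub : (0 + blockEmb i h) - 0 = blockEmb i h := by simp
  rw [hsub] at h1
  have happ : ∀ j, (blockEmb i h : FullSpace M n) j = (Pi.single i h : ∀ j, EuclideanSpace ℝ (Fin (n j))) j := by
    intro j; rfl
  have hinner : ⟪gradient f 0, blockEmb i h⟫ = ⟪gradient f 0 i, h⟫ := by
    rw [PiLp.inner_apply]
    rw [Fintype.sum_eq_single i]
    · rw [happ, Pi.single_eq_same]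
    · intro j hj
      rw [happ, Pi.single_eq_of_ne hj, inner_zero_right]
  have hn1 : norm1Sq L (blockEmb i h) = L i := by
    unfold norm1Sq
    rw [Fintype.sum_eq_single i]
    · rw [happ, Pi.single_eq_same, hnorm]; ring
    · intro j hj
      rw [happ, Pi.single_eq_of_ne hj]; simp
  rw [hinner, hn1] at h1
  rw [hnorm] at h2
  have hLi := hL i
  nlinarith [h1, h2]
end

section
/- Under the block-wise descent lemma f(u + Eⁱh_i) ≤ f(u) + ⟨∇_i f(u), h_i⟩ + (L_i/2)‖h_i‖², the constrained block update ūⁱ(u) = u + Eⁱ(v̄ⁱ(u) − uⁱ) satisfies the sufficient decrease property f(u) − f(ūⁱ(u)) ≥ (L_i/2)‖v̄ⁱ(u) − uⁱ‖². -/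
open scoped RealInnerProductSpace

/-- sufficient decrease of the constrained block update. -/
theorem block_update_sufficient_decrease {M : ℕ} {n : Fin M → ℕ}
    (f : FullSpace M n → ℝ) (hf : Differentiable ℝ f)
    (L : Fin M → ℝ) (hL : ∀ i, 0 < L i)
    (hdesc : ∀ (i : Fin M) (u : FullSpace M n) (h : EuclideanSpace ℝ (Fin (n i))),
      f (u + blockEmb i h) ≤ f u + ⟪gradient f u i, h⟫ + L i / 2 * ‖h‖ ^ 2)
    (U : (i : Fin M) → Set (EuclideanSpace ℝ (Fin (n i))))
    (hUclosed : ∀ i, IsClosed (U i)) (hUconvex : ∀ i, Convex ℝ (U i))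
    (u : FullSpace M n) (i : Fin M) (hui : u i ∈ U i)
    (vbar : EuclideanSpace ℝ (Fin (n i))) (hvbarU : vbar ∈ U i)
    (hmin : ∀ v ∈ U i,
      ⟪gradient f u i, vbar - u i⟫ + L i / 2 * ‖vbar - u i‖ ^ 2 ≤
        ⟪gradient f u i, v - u i⟫ + L i / 2 * ‖v - u i‖ ^ 2) :
    f u - f (u + blockEmb i (vbar - u i)) ≥ L i / 2 * ‖vbar - u i‖ ^ 2 := by
  set g := gradient f u i with hg
  set d := vbar - u i with hd
  set c : ℝ := ⟪g, d⟫ with hc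
  set s : ℝ := ‖d‖ ^ 2 with hs
  have hs0 : 0 ≤ s := by positivity
  -- key: c ≤ - L i * s
  have key : c ≤ - (L i) * s := by
    have hev : ∀ t ∈ Set.Ioo (0:ℝ) 1, c ≤ -(L i) / 2 * (1 + t) * s := by
      intro t ht
      have hvt : u i + t • d ∈ U i := by
        have := (hUconvex i) hui hvbarU (by linarith [ht.1, ht.2] : (0:ℝ) ≤ 1 - t)
          (le_of_lt ht.1) (by ring)
        convert this using 1
        simp only [hd]
        module
      have h1 := hmin _ hvt
      have h2 : (u i + t • d) - u i = t • d := by abel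
      rw [h2] at h1
      have hip : ⟪g, t • d⟫ = t * c := by
        rw [hc, real_inner_smul_right]
      have hnrm : ‖t • d‖ ^ 2 = t ^ 2 * s := by
        rw [norm_smul, hs]; rw [mul_pow]
        congr 1
        rw [Real.norm_eq_abs, sq_abs]
      rw [hip, hnrm] at h1
      -- c + L/2 s ≤ t c + L/2 t² s
      have ht1 : 0 < 1 - t := by linarith [ht.2]
      nlinarith [h1, ht1, hs0, (hL i).le]
    have hlim : Filter.Tendsto (fun t : ℝ => -(L i) / 2 * (1 + t) * s)
        (nhdsWithin 1 (Set.Ioo (0:ℝ) 1)) (nhds (-(L i) * s)) := by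
      have : Filter.Tendsto (fun t : ℝ => -(L i) / 2 * (1 + t) * s)
          (nhds 1) (nhds (-(L i) / 2 * (1 + 1) * s)) := by
        apply Filter.Tendsto.mul_const
        apply Filter.Tendsto.const_mul
        exact Filter.tendsto_id.const_add 1
      have h2 := this.mono_left (nhdsWithin_le_nhds (s := Set.Ioo (0:ℝ) 1))
      convert h2 using 2
      ring
    have hne : (nhdsWithin (1:ℝ) (Set.Ioo (0:ℝ) 1)).NeBot := by
      apply mem_closure_iff_nhdsWithin_neBot.mp
      rw [closure_Ioo one_ne_zero.symm]
      exact Set.right_mem_Icc.mpr one_pos.le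
    exact ge_of_tendsto hlim (eventually_nhdsWithin_of_forall hev)
  have hdl := hdesc i u d
  have : f (u + blockEmb i d) ≤ f u + c + L i / 2 * s := hdl
  nlinarith [key, hs0, (hL i).le]
end

section
/- For a convex function f with coordinate-wise Lipschitz gradient, the PCDM iterate u_{k+1} = Σᵢ (1/M) ūⁱ(u_k), where each ūⁱ(u_k) = u_k + Eⁱ(v̄ⁱ(u_k) − uⁱ_k), satisfies f(u_{k+1}) ≤ f(u_k) − (1/M) Σᵢ (L_i/2)‖v̄ⁱ(u_k) − uⁱ_k‖²; in particular f(u_{k+1}) ≤ f(u_k). -/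
open scoped RealInnerProductSpace

/-- one PCDM iteration decreases the objective by at least the averaged
sum of the block sufficient decreases. -/
theorem pcdm_iteration_decrease {M : ℕ} {n : Fin M → ℕ} (hM : 0 < M)
    (f : FullSpace M n → ℝ) (hconv : ConvexOn ℝ Set.univ f) (hf : Differentiable ℝ f)
    (L : Fin M → ℝ) (hL : ∀ i, 0 < L i)
    (hdesc : ∀ (i : Fin M) (u : FullSpace M n) (h : EuclideanSpace ℝ (Fin (n i))),
      f (u + blockEmb i h) ≤ f u + ⟪gradient f u i, h⟫ + L i / 2 * ‖h‖ ^ 2)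
    (U : (i : Fin M) → Set (EuclideanSpace ℝ (Fin (n i))))
    (hUclosed : ∀ i, IsClosed (U i)) (hUconvex : ∀ i, Convex ℝ (U i))
    (uk : FullSpace M n) (hukU : ∀ i, uk i ∈ U i)
    (vbar : (i : Fin M) → EuclideanSpace ℝ (Fin (n i)))
    (hvbarU : ∀ i, vbar i ∈ U i)
    (hmin : ∀ i, ∀ v ∈ U i,
      ⟪gradient f uk i, vbar i - uk i⟫ + L i / 2 * ‖vbar i - uk i‖ ^ 2 ≤
        ⟪gradient f uk i, v - uk i⟫ + L i / 2 * ‖v - uk i‖ ^ 2)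
    (uk1 : FullSpace M n)
    (hupd : ∀ i, uk1 i = (1 / (M : ℝ)) • vbar i + (((M : ℝ) - 1) / (M : ℝ)) • uk i) :
    f uk1 ≤ f uk - (1 / (M : ℝ)) * ∑ i, L i / 2 * ‖vbar i - uk i‖ ^ 2 ∧
      f uk1 ≤ f uk := by
  have hM' : (0:ℝ) < M := by exact_mod_cast hM
  -- key per-block inequality from optimality of vbar i
  have hkey : ∀ i, ⟪gradient f uk i, vbar i - uk i⟫ + L i * ‖vbar i - uk i‖ ^ 2 ≤ 0 := by
    intro i
    set c := ⟪gradient f uk i, vbar i - uk i⟫ with hc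
    set r := ‖vbar i - uk i‖ ^ 2 with hrr
    have hr0 : (0:ℝ) ≤ r := by positivity
    have hstep : ∀ ε : ℝ, 0 < ε → ε ≤ 1 → c + L i * r ≤ L i / 2 * r * ε := by
      intro ε hε hε1
      have hv : (1 - ε) • vbar i + ε • uk i ∈ U i :=
        (hUconvex i) (hvbarU i) (hukU i) (by linarith) hε.le (by ring)
      have hle := hmin i _ hv
      have hveq : ((1 - ε) • vbar i + ε • uk i) - uk i = (1 - ε) • (vbar i - uk i) := by
        module
      rw [hveq, real_inner_smul_right, norm_smul, mul_pow] at hle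
      have habs : ‖(1 - ε)‖ ^ 2 = (1 - ε) ^ 2 := by
        rw [Real.norm_eq_abs, sq_abs]
      rw [habs] at hle
      -- hle : c + L i / 2 * r ≤ (1-ε) * c + L i / 2 * ((1-ε)^2 * r)
      rw [← hc, ← hrr] at hle
      have hmul : ε * (c + L i * r) ≤ ε * (L i / 2 * r * ε) := by nlinarith [hle]
      exact (mul_le_mul_iff_right₀ hε).mp hmul
    by_contra hcon
    push_neg at hcon
    set A := c + L i * r with hA
    set B := L i / 2 * r with hB
    have hB0 : (0:ℝ) ≤ B := mul_nonneg (div_nonneg (hL i).le zero_le_two) hr0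
    have hden : (0:ℝ) < 2 * B + 1 := by linarith
    set ε := min 1 (A / (2 * B + 1)) with hε
    have hεpos : 0 < ε := lt_min one_pos (div_pos hcon hden)
    have hε1 : ε ≤ 1 := min_le_left _ _
    have h2 : ε ≤ A / (2 * B + 1) := min_le_right _ _
    rw [le_div_iff₀ hden] at h2
    have h3 := hstep ε hεpos hε1
    nlinarith [mul_le_mul_of_nonneg_left h2 hB0]
  -- per-block sufficient decrease
  have hblock : ∀ i, f (uk + blockEmb i (vbar i - uk i)) ≤
      f uk - L i / 2 * ‖vbar i - uk i‖ ^ 2 := by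
    intro i
    have h1 := hdesc i uk (vbar i - uk i)
    have h2 := hkey i
    nlinarith [h1, h2]
  -- uk1 as a convex combination
  have hM0 : (M:ℝ) ≠ 0 := ne_of_gt hM'
  have hrep : uk1 = ∑ i, (1 / (M : ℝ)) • (uk + blockEmb i (vbar i - uk i)) := by
    refine PiLp.ext fun j => ?_
    have hsum : (∑ i, (1 / (M : ℝ)) • (uk + blockEmb i (vbar i - uk i))) j
        = ∑ i, (1 / (M : ℝ)) • ((uk + blockEmb i (vbar i - uk i)) j) :=
      by rw [WithLp.ofLp_sum, Finset.sum_apply]; rfl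
    rw [hupd j, hsum]
    simp only [blockEmb, PiLp.add_apply, WithLp.equiv_symm_apply, PiLp.toLp_apply, smul_add,
      Finset.sum_add_distrib, Finset.sum_const, Finset.card_univ, Fintype.card_fin]
    have hsingle : ∑ i, (1 / (M : ℝ)) •
        (Pi.single (M := fun i => EuclideanSpace ℝ (Fin (n i))) i (vbar i - uk i) j)
        = (1 / (M : ℝ)) • (vbar j - uk j) := by
      rw [Finset.sum_eq_single j]
      · simp
      · intro b _ hbj
        rw [Pi.single_eq_of_ne' hbj, smul_zero]
      · simp
    rw [hsingle, ← Nat.cast_smul_eq_nsmul ℝ]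
    match_scalars <;> (field_simp; try ring)
  -- Jensen
  have hw0 : ∀ i ∈ Finset.univ, (0:ℝ) ≤ (fun _ : Fin M => 1 / (M:ℝ)) i :=
    fun i _ => by positivity
  have hw1 : ∑ _i : Fin M, (1:ℝ) / (M:ℝ) = 1 := by
    rw [Finset.sum_const, Finset.card_univ, Fintype.card_fin, nsmul_eq_mul]
    field_simp
  have hjensen := hconv.map_sum_le (t := Finset.univ)
    (w := fun _ : Fin M => 1 / (M:ℝ))
    (p := fun i => uk + blockEmb i (vbar i - uk i)) hw0 hw1
    (fun i _ => Set.mem_univ _)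
  rw [← hrep] at hjensen
  have hsum2 : ∑ i, (1 / (M:ℝ)) * f (uk + blockEmb i (vbar i - uk i))
      ≤ ∑ i, (1 / (M:ℝ)) * (f uk - L i / 2 * ‖vbar i - uk i‖ ^ 2) := by
    apply Finset.sum_le_sum
    intro i _
    exact mul_le_mul_of_nonneg_left (hblock i) (by positivity)
  have hfin : f uk1 ≤ f uk - (1 / (M:ℝ)) * ∑ i, L i / 2 * ‖vbar i - uk i‖ ^ 2 := by
    calc f uk1 ≤ ∑ i, (1 / (M:ℝ)) * f (uk + blockEmb i (vbar i - uk i)) := hjensen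
    _ ≤ ∑ i, (1 / (M:ℝ)) * (f uk - L i / 2 * ‖vbar i - uk i‖ ^ 2) := hsum2
    _ = f uk - (1 / (M:ℝ)) * ∑ i, L i / 2 * ‖vbar i - uk i‖ ^ 2 := by
        simp only [mul_sub, Finset.sum_sub_distrib, Finset.sum_const,
          Finset.card_univ, Fintype.card_fin, nsmul_eq_mul, ← Finset.mul_sum]
        congr 1
        field_simp
  have hpos : 0 ≤ (1 / (M:ℝ)) * ∑ i, L i / 2 * ‖vbar i - uk i‖ ^ 2 := by
    apply mul_nonneg (by positivity)
    apply Finset.sum_nonneg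
    intro i _
    exact mul_nonneg (div_nonneg (hL i).le zero_le_two) (by positivity)
  exact ⟨hfin, by linarith⟩
end

section
/- For the PCDM algorithm applied to minimizing a convex f with coordinate-wise Lipschitz gradient over U = U¹×…×U^M, the key recursion holds: r_{k+1}² ≤ r_k² − 2(f(u_{k+1}) − f(u_k)) + (2/M)⟨∇f(u_k), u_* − u_k⟩, where r_k = ‖u_k − u_*‖₁ and u_* is a minimizer. -/
open scoped RealInnerProductSpace

section Aux

variable {M : ℕ} {n : Fin M → ℕ}

lemma blockEmb_apply_same (i : Fin M) (h : EuclideanSpace ℝ (Fin (n i))) :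
    blockEmb i h i = h :=
  Pi.single_eq_same (M := fun i : Fin M => EuclideanSpace ℝ (Fin (n i))) i h

lemma blockEmb_apply_ne {i j : Fin M} (hj : j ≠ i) (h : EuclideanSpace ℝ (Fin (n i))) :
    blockEmb i h j = 0 :=
  Pi.single_eq_of_ne (M := fun i : Fin M => EuclideanSpace ℝ (Fin (n i))) hj h

lemma blockEmb_smul (i : Fin M) (t : ℝ) (h : EuclideanSpace ℝ (Fin (n i))) :
    blockEmb i (t • h) = t • blockEmb i h := by
  ext j : 1
  rcases eq_or_ne j i with rfl | hj
  · rw [blockEmb_apply_same]; exact congrArg (t • ·) (blockEmb_apply_same j h).symm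
  · rw [blockEmb_apply_ne hj]
    show (0 : EuclideanSpace ℝ (Fin (n j))) = t • blockEmb i h j
    rw [blockEmb_apply_ne hj, smul_zero]

lemma inner_blockEmb_right (w : FullSpace M n) (i : Fin M) (h : EuclideanSpace ℝ (Fin (n i))) :
    ⟪w, blockEmb i h⟫ = ⟪w i, h⟫ := by
  classical
  rw [PiLp.inner_apply, Finset.sum_eq_single i]
  · rw [blockEmb_apply_same]
  · intro j _ hj
    rw [blockEmb_apply_ne hj, inner_zero_right]
  · simp

lemma fullSpace_sum_apply {ι : Type*} (s : Finset ι) (z : ι → FullSpace M n) (j : Fin M) :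
    (∑ i ∈ s, z i) j = ∑ i ∈ s, z i j := by
  classical
  induction s using Finset.cons_induction with
  | empty => simp
  | cons a s ha ih => rw [Finset.sum_cons, PiLp.add_apply, ih, Finset.sum_cons]

lemma uk1_decomp (hM : 0 < M) (uk uk1 : FullSpace M n)
    (vbar : (i : Fin M) → EuclideanSpace ℝ (Fin (n i)))
    (hupd : ∀ i, uk1 i = (1 / (M : ℝ)) • vbar i + (((M : ℝ) - 1) / (M : ℝ)) • uk i) :
    uk1 = ∑ i, (1/(M:ℝ)) • (uk + blockEmb i (vbar i - uk i)) := by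
  classical
  have hMne : (M:ℝ) ≠ 0 := by
    exact Nat.cast_ne_zero.mpr hM.ne'
  ext j : 1
  rw [fullSpace_sum_apply]
  have e1 : ∀ i, ((1/(M:ℝ)) • (uk + blockEmb i (vbar i - uk i))) j
      = (1/(M:ℝ)) • uk j + (1/(M:ℝ)) • (blockEmb i (vbar i - uk i) j) := by
    intro i
    rw [PiLp.smul_apply, PiLp.add_apply, smul_add]
  rw [Finset.sum_congr rfl fun i _ => e1 i, Finset.sum_add_distrib, Finset.sum_const,
    ← Finset.smul_sum, Finset.sum_eq_single j
      (fun i _ hij => blockEmb_apply_ne (Ne.symm hij) (vbar i - uk i)) (by simp),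
    blockEmb_apply_same]
  rw [Finset.card_univ, Fintype.card_fin,
    ← Nat.cast_smul_eq_nsmul ℝ M ((1/(M:ℝ)) • uk j)]
  rw [hupd j]
  match_scalars <;> field_simp <;> try ring

lemma descent_lemma (f : FullSpace M n → ℝ) (hf : Differentiable ℝ f)
    (Li : ℝ) (hLi : 0 ≤ Li) (i : Fin M)
    (hLip : ∀ (u : FullSpace M n) (h : EuclideanSpace ℝ (Fin (n i))),
      ‖gradient f (u + blockEmb i h) i - gradient f u i‖ ≤ Li * ‖h‖)
    (x : FullSpace M n) (h : EuclideanSpace ℝ (Fin (n i))) :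
    f (x + blockEmb i h) ≤ f x + ⟪gradient f x i, h⟫ + Li / 2 * ‖h‖ ^ 2 := by
  set v : FullSpace M n := blockEmb i h with hv
  set D : ℝ → ℝ := fun t => ⟪gradient f (x + t • v) i, h⟫ with hD
  have hline : ∀ u : FullSpace M n, ⟪gradient f u, v⟫ = ⟪gradient f u i, h⟫ := fun u =>
    inner_blockEmb_right (gradient f u) i h
  have hder : ∀ t : ℝ, HasDerivAt (fun s : ℝ => f (x + s • v)) (D t) t := by
    intro t
    have h1 : HasDerivAt (fun s : ℝ => x + s • v) v t := by
      simpa using ((hasDerivAt_id t).smul_const v).const_add x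
    have h2 := ((hf (x + t • v)).hasGradientAt.hasFDerivAt).comp_hasDerivAt t h1
    simpa [InnerProductSpace.toDual_apply_apply, hline, -toDual_gradient, Function.comp_def] using h2
  have hshift : ∀ s t : ℝ, x + t • v = (x + s • v) + blockEmb i ((t - s) • h) := by
    intro s t
    rw [blockEmb_smul, ← hv, sub_smul]
    abel
  have hlip : LipschitzWith ⟨Li * ‖h‖ ^ 2, by positivity⟩ D := by
    apply LipschitzWith.of_dist_le_mul
    intro t s
    rw [Real.dist_eq, Real.dist_eq]
    have key : D t - D s = ⟪gradient f ((x + s • v) + blockEmb i ((t - s) • h)) i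
        - gradient f (x + s • v) i, h⟫ := by
      rw [← hshift s t, hD]; simp [inner_sub_left]
    calc |D t - D s| ≤ ‖gradient f ((x + s • v) + blockEmb i ((t - s) • h)) i
          - gradient f (x + s • v) i‖ * ‖h‖ := by rw [key]; exact abs_real_inner_le_norm _ _
      _ ≤ (Li * ‖(t - s) • h‖) * ‖h‖ := by
          apply mul_le_mul_of_nonneg_right (hLip _ _) (norm_nonneg _)
      _ = Li * ‖h‖ ^ 2 * |t - s| := by rw [norm_smul]; simp [Real.norm_eq_abs]; ring
  have hcont : Continuous D := hlip.continuous
  have hint : IntervalIntegrable D MeasureTheory.volume 0 1 :=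
    hcont.intervalIntegrable 0 1
  have ftc : ∫ t in (0:ℝ)..1, D t = f (x + v) - f x := by
    have := intervalIntegral.integral_eq_sub_of_hasDerivAt
      (f := fun s : ℝ => f (x + s • v)) (f' := D) (fun t _ => hder t) hint
    simpa using this
  have hbound : ∀ t ∈ Set.Icc (0:ℝ) 1, D t ≤ ⟪gradient f x i, h⟫ + (Li * ‖h‖ ^ 2) * t := by
    intro t ht
    have h0 : x + t • v = x + blockEmb i (t • h) := by
      have := hshift 0 t; simpa using this
    have h1 : D t - ⟪gradient f x i, h⟫ = ⟪gradient f (x + blockEmb i (t • h)) i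
        - gradient f x i, h⟫ := by rw [hD]; simp [h0, inner_sub_left]
    have h2 : D t - ⟪gradient f x i, h⟫ ≤ Li * ‖t • h‖ * ‖h‖ := by
      rw [h1]
      calc ⟪gradient f (x + blockEmb i (t • h)) i - gradient f x i, h⟫
          ≤ ‖gradient f (x + blockEmb i (t • h)) i - gradient f x i‖ * ‖h‖ :=
            real_inner_le_norm _ _
        _ ≤ Li * ‖t • h‖ * ‖h‖ :=
            mul_le_mul_of_nonneg_right (hLip _ _) (norm_nonneg _)
    have h3 : ‖t • h‖ = t * ‖h‖ := by
      rw [norm_smul, Real.norm_eq_abs, abs_of_nonneg ht.1]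
    rw [h3] at h2
    nlinarith [h2]
  have hmono : ∫ t in (0:ℝ)..1, D t ≤
      ∫ t in (0:ℝ)..1, (⟪gradient f x i, h⟫ + (Li * ‖h‖ ^ 2) * t) := by
    apply intervalIntegral.integral_mono_on (by norm_num) hint
    · exact (continuous_const.add (continuous_const.mul continuous_id)).intervalIntegrable 0 1
    · exact hbound
  have hval : ∫ t in (0:ℝ)..1, (⟪gradient f x i, h⟫ + (Li * ‖h‖ ^ 2) * t)
      = ⟪gradient f x i, h⟫ + Li / 2 * ‖h‖ ^ 2 := by
    have hB : IntervalIntegrable (fun t : ℝ => (Li * ‖h‖ ^ 2) * t) MeasureTheory.volume 0 1 :=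
      (intervalIntegral.intervalIntegrable_id).const_mul _
    rw [intervalIntegral.integral_add intervalIntegrable_const hB,
      intervalIntegral.integral_const_mul, integral_id]
    simp
    ring
  rw [ftc, hval] at hmono
  linarith

end Aux

set_option maxHeartbeats 2000000 in
/-- the key recursion of the PCDM convergence analysis. -/
theorem pcdm_key_recursion {M : ℕ} {n : Fin M → ℕ} (hM : 0 < M)
    (f : FullSpace M n → ℝ) (hconv : ConvexOn ℝ Set.univ f) (hf : Differentiable ℝ f)
    (L : Fin M → ℝ) (hL : ∀ i, 0 < L i)
    (hLip : ∀ (i : Fin M) (u : FullSpace M n) (h : EuclideanSpace ℝ (Fin (n i))),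
      ‖gradient f (u + blockEmb i h) i - gradient f u i‖ ≤ L i * ‖h‖)
    (U : (i : Fin M) → Set (EuclideanSpace ℝ (Fin (n i))))
    (hUclosed : ∀ i, IsClosed (U i)) (hUconvex : ∀ i, Convex ℝ (U i))
    (ustar : FullSpace M n) (hstarU : ∀ i, ustar i ∈ U i)
    (hstarmin : ∀ w : FullSpace M n, (∀ i, w i ∈ U i) → f ustar ≤ f w)
    (uk : FullSpace M n) (hukU : ∀ i, uk i ∈ U i)
    (vbar : (i : Fin M) → EuclideanSpace ℝ (Fin (n i)))
    (hvbarU : ∀ i, vbar i ∈ U i)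
    (hmin : ∀ i, ∀ v ∈ U i,
      ⟪gradient f uk i, vbar i - uk i⟫ + L i / 2 * ‖vbar i - uk i‖ ^ 2 ≤
        ⟪gradient f uk i, v - uk i⟫ + L i / 2 * ‖v - uk i‖ ^ 2)
    (uk1 : FullSpace M n)
    (hupd : ∀ i, uk1 i = (1 / (M : ℝ)) • vbar i + (((M : ℝ) - 1) / (M : ℝ)) • uk i) :
    norm1Sq L (uk1 - ustar) ≤ norm1Sq L (uk - ustar) - 2 * (f uk1 - f uk) +
      2 / (M : ℝ) * ⟪gradient f uk, ustar - uk⟫ := by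
  classical
  have hMR : (0:ℝ) < M := by exact_mod_cast hM
  have hMne : (M:ℝ) ≠ 0 := ne_of_gt hMR
  have hM1 : (1:ℝ) ≤ M := by exact_mod_cast hM
  set m : ℝ := 1 / (M:ℝ) with hm
  have hm0 : 0 < m := by positivity
  have hm1 : m ≤ 1 := by rw [hm]; rw [div_le_one hMR]; exact hM1
  -- Step A : optimality of vbar
  have stepA : ∀ i, ⟪gradient f uk i, (vbar i - uk i)⟫ + ⟪gradient f uk i, uk i - ustar i⟫
      + L i * ‖(vbar i - uk i)‖ ^ 2 + L i * ⟪(vbar i - uk i), uk i - ustar i⟫ ≤ 0 := by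
    intro i
    set g := gradient f uk i with hg
    set d : EuclideanSpace ℝ (Fin (n i)) := ustar i - vbar i with hd
    have hstep : ∀ t : ℝ, 0 < t → t ≤ 1 →
        0 ≤ (⟪g, d⟫ + L i * ⟪(vbar i - uk i), d⟫) + t * (L i / 2 * ‖d‖ ^ 2) := by
      intro t ht0 ht1
      have hmem : (1-t) • vbar i + t • ustar i ∈ U i :=
        hUconvex i (hvbarU i) (hstarU i) (by linarith) ht0.le (by ring)
      have H := hmin i _ hmem
      have e1 : (1-t) • vbar i + t • ustar i - uk i = (vbar i - uk i) + t • d := by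
        rw [hd]; module
      rw [e1, inner_add_right, real_inner_smul_right, norm_add_sq_real,
        real_inner_smul_right, norm_smul, Real.norm_eq_abs, abs_of_pos ht0] at H
      have hX : 0 ≤ t * ((⟪g, d⟫ + L i * ⟪(vbar i - uk i), d⟫) + t * (L i / 2 * ‖d‖ ^ 2)) := by
        nlinarith [H]
      have := div_nonneg hX ht0.le
      rwa [mul_div_cancel_left₀ _ (ne_of_gt ht0)] at this
    have hA : 0 ≤ ⟪g, d⟫ + L i * ⟪(vbar i - uk i), d⟫ := by
      by_contra hneg
      push_neg at hneg
      set A := ⟪g, d⟫ + L i * ⟪(vbar i - uk i), d⟫ with hA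
      set c := L i / 2 * ‖d‖ ^ 2 with hc
      have hc0 : 0 ≤ c := mul_nonneg (by linarith [hL i]) (by positivity)
      set s := (-A) / (c + 1) with hs
      have hs0 : 0 < s := div_pos (by linarith) (by linarith)
      set t := min 1 s with ht
      have ht0 : 0 < t := lt_min one_pos hs0
      have ht1 : t ≤ 1 := min_le_left _ _
      have hts : t ≤ s := min_le_right _ _
      have h2 := hstep t ht0 ht1
      have h3 : t * c ≤ s * c := mul_le_mul_of_nonneg_right hts hc0
      have h4 : s * (c + 1) = -A := div_mul_cancel₀ _ (by linarith)
      nlinarith [h2, h3, h4, hs0]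
    have hda : d = -((vbar i - uk i) + (uk i - ustar i)) := by rw [hd]; abel
    have e2 : ⟪g, d⟫ = -⟪g, (vbar i - uk i)⟫ - ⟪g, uk i - ustar i⟫ := by
      rw [hda, inner_neg_right, inner_add_right]; ring
    have e3 : ⟪(vbar i - uk i), d⟫ = -‖(vbar i - uk i)‖ ^ 2 - ⟪(vbar i - uk i), uk i - ustar i⟫ := by
      rw [hda, inner_neg_right, inner_add_right, real_inner_self_eq_norm_sq]; ring
    rw [e2, e3] at hA
    nlinarith [hA, (hL i)]
  -- Step B : descent + Jensen
  have hdesc : ∀ i, f (uk + blockEmb i ((vbar i - uk i))) ≤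
      f uk + (⟪gradient f uk i, (vbar i - uk i)⟫ + L i / 2 * ‖(vbar i - uk i)‖ ^ 2) := by
    intro i
    have := descent_lemma f hf (L i) (hL i).le i (hLip i) uk ((vbar i - uk i))
    linarith
  have hukdec : uk1 = ∑ i, m • (uk + blockEmb i (vbar i - uk i)) := by
    rw [hm]
    exact uk1_decomp hM uk uk1 vbar (fun i => by rw [hupd i, hm])
  have hjensen : f uk1 ≤ ∑ i, m * f (uk + blockEmb i ((vbar i - uk i))) := by
    rw [hukdec]
    exact hconv.map_sum_le (fun i _ => hm0.le) (by
      rw [Finset.sum_const, Finset.card_univ, Fintype.card_fin, nsmul_eq_mul, hm]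
      field_simp) (fun i _ => trivial)
  have hfd : f uk1 - f uk ≤ m * ∑ i, (⟪gradient f uk i, (vbar i - uk i)⟫ + L i / 2 * ‖(vbar i - uk i)‖ ^ 2) := by
    have h2 : ∑ i, m * f (uk + blockEmb i ((vbar i - uk i))) ≤
        ∑ i, m * (f uk + (⟪gradient f uk i, (vbar i - uk i)⟫ + L i / 2 * ‖(vbar i - uk i)‖ ^ 2)) :=
      Finset.sum_le_sum fun i _ => mul_le_mul_of_nonneg_left (hdesc i) hm0.le
    have h3 : ∑ i, m * (f uk + (⟪gradient f uk i, (vbar i - uk i)⟫ + L i / 2 * ‖(vbar i - uk i)‖ ^ 2))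
        = f uk + m * ∑ i, (⟪gradient f uk i, (vbar i - uk i)⟫ + L i / 2 * ‖(vbar i - uk i)‖ ^ 2) := by
      rw [Finset.sum_congr rfl fun i _ => mul_add m _ _, Finset.sum_add_distrib,
        Finset.sum_const, Finset.card_univ, Fintype.card_fin, nsmul_eq_mul,
        ← Finset.mul_sum]
      have e4 : (M:ℝ) * (m * f uk) = f uk := by
        rw [hm]; field_simp
      rw [e4]
    linarith [hjensen, h2, h3.le, h3.ge]
  -- per-coordinate key inequality
  have hsub : ∀ (w z : FullSpace M n) (i : Fin M), (w - z) i = w i - z i :=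
    fun w z i => rfl
  have huk1sub : ∀ i, (uk1 - ustar) i = (uk i - ustar i) + m • (vbar i - uk i) := by
    intro i
    rw [hsub, hupd i, hm]
    match_scalars <;> field_simp <;> try ring
  have hkey : ∀ i, L i * ‖(uk1 - ustar) i‖ ^ 2 ≤ L i * ‖(uk - ustar) i‖ ^ 2
      - 2 * m * (⟪gradient f uk i, (vbar i - uk i)⟫ + L i / 2 * ‖(vbar i - uk i)‖ ^ 2)
      + 2 * m * ⟪gradient f uk i, ustar i - uk i⟫ := by
    intro i
    rw [huk1sub i, hsub]
    have e1 : ‖(uk i - ustar i) + m • (vbar i - uk i)‖ ^ 2 = ‖uk i - ustar i‖ ^ 2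
        + 2 * (m * ⟪uk i - ustar i, (vbar i - uk i)⟫) + m ^ 2 * ‖(vbar i - uk i)‖ ^ 2 := by
      rw [norm_add_sq_real, real_inner_smul_right, norm_smul, Real.norm_eq_abs,
        abs_of_pos hm0]
      ring
    have e2 : ⟪gradient f uk i, ustar i - uk i⟫ = -⟪gradient f uk i, uk i - ustar i⟫ := by
      rw [← inner_neg_right, neg_sub]
    have e3 : ⟪(vbar i - uk i), uk i - ustar i⟫ = ⟪uk i - ustar i, (vbar i - uk i)⟫ := real_inner_comm _ _
    have hS := stepA i
    rw [e3] at hS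
    rw [e1, e2]
    have hH : (0:ℝ) ≤ ‖(vbar i - uk i)‖ ^ 2 := by positivity
    nlinarith [mul_nonpos_of_nonneg_of_nonpos (by linarith : (0:ℝ) ≤ 2 * m) hS,
      mul_nonneg (mul_nonneg (mul_nonneg hm0.le (hL i).le) hH) (by linarith : (0:ℝ) ≤ 1 - m)]
  -- summation
  have hsumkey := Finset.sum_le_sum fun i (_ : i ∈ Finset.univ) => hkey i
  have hinner : ⟪gradient f uk, ustar - uk⟫ = ∑ i, ⟪gradient f uk i, ustar i - uk i⟫ := by
    rw [PiLp.inner_apply]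
    exact Finset.sum_congr rfl fun i _ => by rw [hsub]
  have hsplit : ∑ i, (L i * ‖(uk - ustar) i‖ ^ 2
      - 2 * m * (⟪gradient f uk i, (vbar i - uk i)⟫ + L i / 2 * ‖(vbar i - uk i)‖ ^ 2)
      + 2 * m * ⟪gradient f uk i, ustar i - uk i⟫)
      = (∑ i, L i * ‖(uk - ustar) i‖ ^ 2)
      - 2 * m * (∑ i, (⟪gradient f uk i, (vbar i - uk i)⟫ + L i / 2 * ‖(vbar i - uk i)‖ ^ 2))
      + 2 * m * (∑ i, ⟪gradient f uk i, ustar i - uk i⟫) := by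
    rw [Finset.sum_add_distrib, Finset.sum_sub_distrib, ← Finset.mul_sum, ← Finset.mul_sum]
  rw [hsplit] at hsumkey
  rw [norm1Sq, norm1Sq, hinner, show (2 / (M:ℝ)) = 2 * m by rw [hm]; ring]
  linarith [hsumkey, hfd]
end

section
/- The PCDM algorithm applied to a convex f with coordinate-wise Lipschitz gradient over a separable convex feasible set achieves the sublinear rate f(u_k) − f* ≤ (M/(M+k))·((1/2)r₀² + f(u₀) − f*), where r₀ = ‖u₀ − u_*‖₁ and f* is the optimal value. -/
open scoped RealInnerProductSpace

variable {M : ℕ} {n : Fin M → ℕ}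

lemma blockEmb_apply (i : Fin M) (h : EuclideanSpace ℝ (Fin (n i))) (j : Fin M) :
    blockEmb i h j = (Pi.single (M := fun i => EuclideanSpace ℝ (Fin (n i))) i h) j := by
  simp [blockEmb]

lemma smul_blockEmb (t : ℝ) (i : Fin M) (h : EuclideanSpace ℝ (Fin (n i))) :
    t • blockEmb i h = blockEmb i (t • h) := by
  refine PiLp.ext fun j => ?_
  rw [PiLp.smul_apply, blockEmb_apply, blockEmb_apply]
  by_cases hji : j = i
  · subst hji; rw [Pi.single_eq_same, Pi.single_eq_same]
  · rw [Pi.single_eq_of_ne hji, Pi.single_eq_of_ne hji, smul_zero]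

lemma inner_blockEmb (g : FullSpace M n) (i : Fin M) (h : EuclideanSpace ℝ (Fin (n i))) :
    ⟪g, blockEmb i h⟫ = ⟪g i, h⟫ := by
  rw [PiLp.inner_apply]
  rw [Finset.sum_eq_single i]
  · rw [blockEmb_apply, Pi.single_eq_same]
  · intro j _ hj
    rw [blockEmb_apply, Pi.single_eq_of_ne hj, inner_zero_right]
  · simp

lemma fderiv_apply_eq_inner (f : FullSpace M n → ℝ) (hf : Differentiable ℝ f)
    (p v : FullSpace M n) : fderiv ℝ f p v = ⟪gradient f p, v⟫ := by
  have h := (hf p).hasGradientAt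
  rw [hasGradientAt_iff_hasFDerivAt] at h
  rw [h.fderiv]
  exact InnerProductSpace.toDual_apply_apply

lemma hasDerivAt_line (f : FullSpace M n → ℝ) (hf : Differentiable ℝ f)
    (x e : FullSpace M n) (t : ℝ) :
    HasDerivAt (fun s : ℝ => f (x + s • e)) ⟪gradient f (x + t • e), e⟫ t := by
  have h1 : HasDerivAt (fun s : ℝ => x + s • e) e t := by
    simpa using ((hasDerivAt_id t).smul_const e).const_add x
  have h2 := ((hf (x + t • e)).hasFDerivAt).comp_hasDerivAt t h1
  rwa [fderiv_apply_eq_inner f hf] at h2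

lemma descent_block (f : FullSpace M n → ℝ) (hf : Differentiable ℝ f)
    {i : Fin M} {Li : ℝ} (hLi : 0 < Li)
    (hLip : ∀ (v : FullSpace M n) (h : EuclideanSpace ℝ (Fin (n i))),
      ‖gradient f (v + blockEmb i h) i - gradient f v i‖ ≤ Li * ‖h‖)
    (x : FullSpace M n) (h : EuclideanSpace ℝ (Fin (n i))) :
    f (x + blockEmb i h) ≤ f x + ⟪gradient f x i, h⟫ + Li / 2 * ‖h‖ ^ 2 := by
  set e := blockEmb i h with he
  set ψ : ℝ → ℝ := fun t => ⟪gradient f (x + t • e) i, h⟫ with hψ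
  have φd : ∀ t : ℝ, HasDerivAt (fun s : ℝ => f (x + s • e)) (ψ t) t := by
    intro t
    have h1 := hasDerivAt_line f hf x e t
    rwa [he, inner_blockEmb] at h1
  have glip : ∀ s t : ℝ,
      ‖gradient f (x + s • e) i - gradient f (x + t • e) i‖ ≤ Li * (|s - t| * ‖h‖) := by
    intro s t
    have h1 := hLip (x + t • e) ((s - t) • h)
    rw [← smul_blockEmb, ← he] at h1
    have h2 : x + t • e + (s - t) • e = x + s • e := by module
    rw [h2] at h1
    simpa [norm_smul, mul_assoc] using h1
  have ψlip : LipschitzWith (Real.toNNReal (Li * ‖h‖ ^ 2)) ψ := by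
    apply LipschitzWith.of_dist_le_mul
    intro s t
    rw [Real.dist_eq, Real.dist_eq]
    have h1 : ψ s - ψ t = ⟪gradient f (x + s • e) i - gradient f (x + t • e) i, h⟫ := by
      rw [hψ]; simp [inner_sub_left]
    rw [h1]
    calc |⟪gradient f (x + s • e) i - gradient f (x + t • e) i, h⟫|
        ≤ ‖gradient f (x + s • e) i - gradient f (x + t • e) i‖ * ‖h‖ :=
          abs_real_inner_le_norm _ _
      _ ≤ Li * (|s - t| * ‖h‖) * ‖h‖ :=
          mul_le_mul_of_nonneg_right (glip s t) (norm_nonneg _)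
      _ = Real.toNNReal (Li * ‖h‖ ^ 2) * |s - t| := by
          rw [Real.coe_toNNReal _ (by positivity)]; ring
  have ψcont : Continuous ψ := ψlip.continuous
  have key : ∫ t in (0:ℝ)..1, ψ t = f (x + e) - f x := by
    have h1 := intervalIntegral.integral_eq_sub_of_hasDerivAt
      (f := fun s : ℝ => f (x + s • e)) (f' := ψ) (a := 0) (b := 1)
      (fun t _ => φd t) (ψcont.intervalIntegrable 0 1)
    simpa using h1
  have bound : ∀ t ∈ Set.Icc (0:ℝ) 1, ψ t ≤ ⟪gradient f x i, h⟫ + Li * ‖h‖ ^ 2 * t := by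
    intro t ht
    have h1 : ψ t - ⟪gradient f x i, h⟫
        = ⟪gradient f (x + t • e) i - gradient f x i, h⟫ := by
      rw [hψ]; simp [inner_sub_left]
    have h2 : ‖gradient f (x + t • e) i - gradient f x i‖ ≤ Li * (|t| * ‖h‖) := by
      have := glip t 0
      simpa using this
    have h3 := (real_inner_le_norm (gradient f (x + t • e) i - gradient f x i) h).trans
      (mul_le_mul_of_nonneg_right h2 (norm_nonneg h))
    rw [abs_of_nonneg ht.1] at h3
    nlinarith [h3, h1]
  have int_le : ∫ t in (0:ℝ)..1, ψ t
      ≤ ∫ t in (0:ℝ)..1, (⟪gradient f x i, h⟫ + Li * ‖h‖ ^ 2 * t) := by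
    apply intervalIntegral.integral_mono_on zero_le_one
      (ψcont.intervalIntegrable 0 1)
      ((continuous_const.add (continuous_const.mul continuous_id)).intervalIntegrable 0 1)
    exact bound
  have int_eval : ∫ t in (0:ℝ)..1, (⟪gradient f x i, h⟫ + Li * ‖h‖ ^ 2 * t)
      = ⟪gradient f x i, h⟫ + Li / 2 * ‖h‖ ^ 2 := by
    rw [intervalIntegral.integral_add (intervalIntegrable_const)
      ((intervalIntegral.intervalIntegrable_id).const_mul _)]
    rw [intervalIntegral.integral_const_mul, integral_id]
    simp
    ring
  rw [key] at int_le
  rw [int_eval] at int_le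
  linarith

lemma grad_support (f : FullSpace M n → ℝ) (hconv : ConvexOn ℝ Set.univ f)
    (hf : Differentiable ℝ f) (x y : FullSpace M n) :
    ⟪gradient f x, y - x⟫ ≤ f y - f x := by
  set e := y - x with he
  have hg : ConvexOn ℝ Set.univ (fun t : ℝ => f (x + t • e)) := by
    have h1 := hconv.comp_affineMap (AffineMap.lineMap x y)
    have h2 : (fun t : ℝ => f (x + t • e)) = f ∘ (AffineMap.lineMap x y) := by
      funext t
      simp [AffineMap.lineMap_apply, he, add_comm]
    rw [h2]
    simpa using h1
  have hd : HasDerivAt (fun t : ℝ => f (x + t • e)) ⟪gradient f x, e⟫ 0 := by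
    have := hasDerivAt_line f hf x e 0
    simpa using this
  have h3 := hg.le_slope_of_hasDerivAt (Set.mem_univ (0:ℝ)) (Set.mem_univ (1:ℝ)) one_pos hd
  rw [slope_def_field] at h3
  simp only [zero_smul, add_zero, one_smul] at h3
  have h4 : x + e = y := by rw [he]; abel
  rw [h4] at h3
  simpa using h3

lemma three_point {E : Type*} [NormedAddCommGroup E] [InnerProductSpace ℝ E]
    {U : Set E} (hU : Convex ℝ U) {g xu vb : E} {Li : ℝ} (hLi : 0 < Li)
    (hvb : vb ∈ U)
    (hmin : ∀ v ∈ U, ⟪g, vb - xu⟫ + Li / 2 * ‖vb - xu‖ ^ 2 ≤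
      ⟪g, v - xu⟫ + Li / 2 * ‖v - xu‖ ^ 2)
    {v : E} (hv : v ∈ U) :
    ⟪g, vb - xu⟫ + Li / 2 * ‖vb - xu‖ ^ 2 + Li / 2 * ‖v - vb‖ ^ 2 ≤
      ⟪g, v - xu⟫ + Li / 2 * ‖v - xu‖ ^ 2 := by
  obtain ⟨A, hA⟩ : ∃ A : ℝ, A = ⟪g, v - vb⟫ + Li * ⟪vb - xu, v - vb⟫ := ⟨_, rfl⟩
  obtain ⟨B, hB⟩ : ∃ B : ℝ, B = Li / 2 * ‖v - vb‖ ^ 2 := ⟨_, rfl⟩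
  have hBnn : 0 ≤ B := by rw [hB]; positivity
  have expand : ∀ t : ℝ, ⟪g, (vb + t • (v - vb)) - xu⟫ + Li / 2 * ‖(vb + t • (v - vb)) - xu‖ ^ 2
      = (⟪g, vb - xu⟫ + Li / 2 * ‖vb - xu‖ ^ 2) + t * A + t ^ 2 * B := by
    intro t
    have h1 : (vb + t • (v - vb)) - xu = (vb - xu) + t • (v - vb) := by abel
    rw [h1, inner_add_right, real_inner_smul_right, norm_add_sq_real,
      real_inner_smul_right, norm_smul, hA, hB]
    simp only [Real.norm_eq_abs, mul_pow, sq_abs]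
    ring
  have hAB : ∀ t ∈ Set.Ioc (0:ℝ) 1, 0 ≤ A + t * B := by
    intro t ht
    have hmem : vb + t • (v - vb) ∈ U := hU.add_smul_sub_mem hvb hv ⟨ht.1.le, ht.2⟩
    have h2 := hmin _ hmem
    rw [expand t] at h2
    have h3 : 0 ≤ t * A + t ^ 2 * B := by linarith
    have h3' : t * (A + t * B) = t * A + t ^ 2 * B := by ring
    exact le_of_mul_le_mul_left (by rw [mul_zero, h3']; exact h3) ht.1
  have hA0 : 0 ≤ A := by
    by_contra hneg
    push_neg at hneg
    have hBpos : (0:ℝ) < 2 * B + 2 := by linarith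
    have ht0 : 0 < -A / (2 * B + 2) := div_pos (by linarith) hBpos
    set t := min 1 (-A / (2 * B + 2)) with htdef
    have htIoc : t ∈ Set.Ioc (0:ℝ) 1 := ⟨lt_min one_pos ht0, min_le_left _ _⟩
    have h2 := hAB t htIoc
    have htle : t ≤ -A / (2 * B + 2) := min_le_right _ _
    have h4 : t * B ≤ (-A / (2 * B + 2)) * B := mul_le_mul_of_nonneg_right htle hBnn
    have h5 : (-A / (2 * B + 2)) * B < -A := by
      rw [div_mul_eq_mul_div, div_lt_iff₀ hBpos]
      nlinarith
    linarith
  have h1 := expand 1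
  simp only [one_smul, one_pow, one_mul] at h1
  have h6 : vb + (v - vb) = v := by abel
  rw [h6] at h1
  rw [h1, hB]
  linarith

lemma sq_norm_comb {E : Type*} [NormedAddCommGroup E] [NormedSpace ℝ E]
    {a b : ℝ} (ha : 0 ≤ a) (hb : 0 ≤ b) (hab : a + b = 1) (x y : E) :
    ‖a • x + b • y‖ ^ 2 ≤ a * ‖x‖ ^ 2 + b * ‖y‖ ^ 2 := by
  have h1 : ‖a • x + b • y‖ ≤ a * ‖x‖ + b * ‖y‖ := by
    refine (norm_add_le _ _).trans ?_
    rw [norm_smul, norm_smul, Real.norm_eq_abs, Real.norm_eq_abs,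
      abs_of_nonneg ha, abs_of_nonneg hb]
  calc ‖a • x + b • y‖ ^ 2 ≤ (a * ‖x‖ + b * ‖y‖) ^ 2 := by
        apply pow_le_pow_left₀ (norm_nonneg _) h1
    _ ≤ a * ‖x‖ ^ 2 + b * ‖y‖ ^ 2 := by nlinarith [sq_nonneg (‖x‖ - ‖y‖), mul_nonneg ha hb]

lemma piLp_sum_apply {ι : Type*} (s : Finset ι) (F : ι → FullSpace M n) (j : Fin M) :
    (∑ i ∈ s, F i) j = ∑ i ∈ s, F i j :=
  map_sum (PiLp.projₗ 2 (fun i : Fin M => EuclideanSpace ℝ (Fin (n i))) (𝕜 := ℝ) j) F s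


set_option maxHeartbeats 2000000 in
/-- Theorem 1: sublinear convergence rate of PCDM. -/
theorem pcdm_sublinear_rate {M : ℕ} {n : Fin M → ℕ} (hM : 0 < M)
    (f : FullSpace M n → ℝ) (hconv : ConvexOn ℝ Set.univ f) (hf : Differentiable ℝ f)
    (L : Fin M → ℝ) (hL : ∀ i, 0 < L i)
    (hLip : ∀ (i : Fin M) (u : FullSpace M n) (h : EuclideanSpace ℝ (Fin (n i))),
      ‖gradient f (u + blockEmb i h) i - gradient f u i‖ ≤ L i * ‖h‖)
    (U : (i : Fin M) → Set (EuclideanSpace ℝ (Fin (n i))))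
    (hUclosed : ∀ i, IsClosed (U i)) (hUconvex : ∀ i, Convex ℝ (U i))
    (ustar : FullSpace M n) (hstarU : ∀ i, ustar i ∈ U i)
    (hstarmin : ∀ w : FullSpace M n, (∀ i, w i ∈ U i) → f ustar ≤ f w)
    (u : ℕ → FullSpace M n) (h0 : ∀ i, u 0 i ∈ U i)
    (vbar : ℕ → (i : Fin M) → EuclideanSpace ℝ (Fin (n i)))
    (hvbarU : ∀ k i, vbar k i ∈ U i)
    (hmin : ∀ k i, ∀ v ∈ U i,
      ⟪gradient f (u k) i, vbar k i - u k i⟫ + L i / 2 * ‖vbar k i - u k i‖ ^ 2 ≤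
        ⟪gradient f (u k) i, v - u k i⟫ + L i / 2 * ‖v - u k i‖ ^ 2)
    (hupd : ∀ k i,
      u (k + 1) i = (1 / (M : ℝ)) • vbar k i + (((M : ℝ) - 1) / (M : ℝ)) • u k i) :
    ∀ k : ℕ, f (u k) - f ustar ≤
      (M : ℝ) / ((M : ℝ) + (k : ℝ)) *
        (1 / 2 * norm1Sq L (u 0 - ustar) + f (u 0) - f ustar) := by
  have hm : (0:ℝ) < (M:ℝ) := by exact_mod_cast hM
  have hm1 : (1:ℝ) ≤ (M:ℝ) := by exact_mod_cast hM
  have hmne : (M:ℝ) ≠ 0 := ne_of_gt hm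
  -- named quantities
  obtain ⟨Δ, hΔ⟩ : ∃ Δ : ℕ → ℝ, ∀ k, Δ k = f (u k) - f ustar := ⟨_, fun _ => rfl⟩
  obtain ⟨Rf, hRf⟩ : ∃ Rf : ℕ → ℝ, ∀ k, Rf k = ∑ i, L i * ‖u k i - ustar i‖ ^ 2 :=
    ⟨_, fun _ => rfl⟩
  obtain ⟨S, hS⟩ : ∃ S : ℕ → ℝ, ∀ k, S k = ∑ i, L i * ‖vbar k i - ustar i‖ ^ 2 :=
    ⟨_, fun _ => rfl⟩
  obtain ⟨Brk, hBrk⟩ : ∃ Brk : ℕ → ℝ, ∀ k, Brk k =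
      ∑ i, (⟪gradient f (u k) i, vbar k i - u k i⟫ + L i / 2 * ‖vbar k i - u k i‖ ^ 2) :=
    ⟨_, fun _ => rfl⟩
  -- feasibility of iterates
  have feas : ∀ k i, u k i ∈ U i := by
    intro k
    induction k with
    | zero => exact h0
    | succ k ih =>
      intro i
      rw [hupd k i]
      refine hUconvex i (hvbarU k i) (ih i) (by positivity)
        (div_nonneg (by linarith) hm.le) (by field_simp; ring)
  -- combination identity for the update
  have hxcomb : ∀ k, u (k+1) = ∑ i, ((1:ℝ)/(M:ℝ)) • (u k + blockEmb i (vbar k i - u k i)) := by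
    intro k
    refine PiLp.ext fun j => ?_
    rw [piLp_sum_apply]
    have hterm : ∀ i : Fin M, (((1:ℝ)/(M:ℝ)) • (u k + blockEmb i (vbar k i - u k i))) j
        = ((1:ℝ)/(M:ℝ)) • u k j + ((1:ℝ)/(M:ℝ)) •
            (Pi.single (M := fun i => EuclideanSpace ℝ (Fin (n i))) i (vbar k i - u k i)) j := by
      intro i
      rw [PiLp.smul_apply, PiLp.add_apply, blockEmb_apply, smul_add]
    rw [Finset.sum_congr rfl (fun i _ => hterm i), Finset.sum_add_distrib,
      Finset.sum_const, ← Finset.smul_sum, Finset.sum_pi_single]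
    simp only [Finset.mem_univ, if_pos, Finset.card_univ, Fintype.card_fin]
    rw [hupd k j, ← Nat.cast_smul_eq_nsmul ℝ]
    match_scalars <;> (field_simp; try ring)
  -- sum of block inner products with the full gradient
  have hsum_inner : ∀ k, ∑ i, ⟪gradient f (u k) i, ustar i - u k i⟫
      = ⟪gradient f (u k), ustar - u k⟫ := by
    intro k
    rw [PiLp.inner_apply]
    exact Finset.sum_congr rfl fun i _ => by rw [PiLp.sub_apply]
  -- three-point inequality summed over blocks
  have h3pt : ∀ k, Brk k + 1/2 * S k ≤ (f ustar - f (u k)) + 1/2 * Rf k := by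
    intro k
    have hptwise : ∀ i : Fin M,
        (⟪gradient f (u k) i, vbar k i - u k i⟫ + L i / 2 * ‖vbar k i - u k i‖ ^ 2)
          + L i / 2 * ‖ustar i - vbar k i‖ ^ 2
        ≤ ⟪gradient f (u k) i, ustar i - u k i⟫ + L i / 2 * ‖ustar i - u k i‖ ^ 2 := by
      intro i
      have := three_point (hUconvex i) (hL i) (hvbarU k i) (hmin k i) (hstarU i)
      linarith
    have hsumle := Finset.sum_le_sum (fun i (_ : i ∈ Finset.univ) => hptwise i)
    have e1 : ∑ i : Fin M, L i / 2 * ‖ustar i - vbar k i‖ ^ 2 = 1/2 * S k := by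
      rw [hS, Finset.mul_sum]
      exact Finset.sum_congr rfl fun i _ => by rw [norm_sub_rev]; ring
    have e2 : ∑ i : Fin M, L i / 2 * ‖ustar i - u k i‖ ^ 2 = 1/2 * Rf k := by
      rw [hRf, Finset.mul_sum]
      exact Finset.sum_congr rfl fun i _ => by rw [norm_sub_rev]; ring
    have e3 := hsum_inner k
    have e4 := grad_support f hconv hf (u k) ustar
    have lhs_eq : ∑ i : Fin M,
        ((⟪gradient f (u k) i, vbar k i - u k i⟫ + L i / 2 * ‖vbar k i - u k i‖ ^ 2)
          + L i / 2 * ‖ustar i - vbar k i‖ ^ 2) = Brk k + 1/2 * S k := by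
      rw [Finset.sum_add_distrib, hBrk, e1]
    have rhs_eq : ∑ i : Fin M,
        (⟪gradient f (u k) i, ustar i - u k i⟫ + L i / 2 * ‖ustar i - u k i‖ ^ 2)
          = ⟪gradient f (u k), ustar - u k⟫ + 1/2 * Rf k := by
      rw [Finset.sum_add_distrib, e3, e2]
    linarith [hsumle, lhs_eq, rhs_eq, e4]
  -- descent step via convexity and block descent lemma
  have hconvstep : ∀ k, f (u (k+1)) ≤ f (u k) + (1/(M:ℝ)) * Brk k := by
    intro k
    have hjensen := hconv.map_sum_le (t := Finset.univ)
      (w := fun _ : Fin M => (1:ℝ)/(M:ℝ))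
      (p := fun i => u k + blockEmb i (vbar k i - u k i))
      (fun i _ => by positivity) (by simp; field_simp)
      (fun i _ => Set.mem_univ _)
    rw [← hxcomb k] at hjensen
    have hdesc : ∀ i : Fin M, f (u k + blockEmb i (vbar k i - u k i)) ≤
        f (u k) + (⟪gradient f (u k) i, vbar k i - u k i⟫
          + L i / 2 * ‖vbar k i - u k i‖ ^ 2) := by
      intro i
      have := descent_block f hf (hL i) (hLip i) (u k) (vbar k i - u k i)
      linarith
    have h2 : ∑ i : Fin M, (1/(M:ℝ)) * f (u k + blockEmb i (vbar k i - u k i))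
        ≤ ∑ i : Fin M, (1/(M:ℝ)) * (f (u k) + (⟪gradient f (u k) i, vbar k i - u k i⟫
          + L i / 2 * ‖vbar k i - u k i‖ ^ 2)) :=
      Finset.sum_le_sum fun i _ => mul_le_mul_of_nonneg_left (hdesc i) (by positivity)
    have h3 : ∑ i : Fin M, (1/(M:ℝ)) * (f (u k) + (⟪gradient f (u k) i, vbar k i - u k i⟫
          + L i / 2 * ‖vbar k i - u k i‖ ^ 2))
        = f (u k) + (1/(M:ℝ)) * Brk k := by
      rw [← Finset.mul_sum, Finset.sum_add_distrib, Finset.sum_const, Finset.card_univ,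
        Fintype.card_fin, nsmul_eq_mul, hBrk]
      field_simp
      ring
    calc f (u (k+1)) ≤ _ := hjensen
      _ ≤ _ := h2
      _ = _ := h3
  -- monotone decrease
  have hbrk_nonpos : ∀ k, Brk k ≤ 0 := by
    intro k
    rw [hBrk]
    apply Finset.sum_nonpos
    intro i _
    have := hmin k i (u k i) (feas k i)
    simpa using this
  have hmono : ∀ k, Δ (k+1) ≤ Δ k := by
    intro k
    have h1 := hconvstep k
    have h2 := hbrk_nonpos k
    have h3 : (1/(M:ℝ)) * Brk k ≤ 0 :=
      mul_nonpos_of_nonneg_of_nonpos (by positivity) h2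
    rw [hΔ, hΔ]
    linarith
  -- distance recursion
  have hRstep : ∀ k, Rf (k+1) ≤ (1/(M:ℝ)) * S k + (((M:ℝ)-1)/(M:ℝ)) * Rf k := by
    intro k
    have hpt : ∀ i : Fin M, L i * ‖u (k+1) i - ustar i‖ ^ 2 ≤
        L i * ((1/(M:ℝ)) * ‖vbar k i - ustar i‖ ^ 2
          + (((M:ℝ)-1)/(M:ℝ)) * ‖u k i - ustar i‖ ^ 2) := by
      intro i
      have hdecomp : u (k+1) i - ustar i = (1/(M:ℝ)) • (vbar k i - ustar i)
          + (((M:ℝ)-1)/(M:ℝ)) • (u k i - ustar i) := by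
        rw [hupd k i]
        match_scalars <;> (field_simp; try ring)
      have hsq := sq_norm_comb (E := EuclideanSpace ℝ (Fin (n i)))
        (a := 1/(M:ℝ)) (b := ((M:ℝ)-1)/(M:ℝ)) (by positivity)
        (div_nonneg (by linarith) hm.le) (by field_simp; ring)
        (vbar k i - ustar i) (u k i - ustar i)
      rw [← hdecomp] at hsq
      exact mul_le_mul_of_nonneg_left hsq (hL i).le
    have hsum2 := Finset.sum_le_sum (fun i (_ : i ∈ Finset.univ) => hpt i)
    rw [← hRf] at hsum2
    calc Rf (k+1) ≤ _ := hsum2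
      _ = (1/(M:ℝ)) * S k + (((M:ℝ)-1)/(M:ℝ)) * Rf k := by
        rw [hS, hRf, Finset.mul_sum, Finset.mul_sum, ← Finset.sum_add_distrib]
        exact Finset.sum_congr rfl fun i _ => by ring
  -- Lyapunov decrease
  have hE : ∀ k, (M:ℝ) * Δ (k+1) + (M:ℝ)/2 * Rf (k+1)
      ≤ (M:ℝ) * Δ k + (M:ℝ)/2 * Rf k - Δ k := by
    intro k
    have h1 := hconvstep k
    have h2 := h3pt k
    have h3 := hRstep k
    have h4 : (M:ℝ) * f (u (k+1)) ≤ (M:ℝ) * f (u k) + Brk k := by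
      have := mul_le_mul_of_nonneg_left h1 hm.le
      have he : (M:ℝ) * (f (u k) + (1/(M:ℝ)) * Brk k) = (M:ℝ) * f (u k) + Brk k := by
        field_simp
      linarith
    have h5 : (M:ℝ) * Brk k ≤ (M:ℝ) * ((f ustar - f (u k)) + 1/2 * Rf k - 1/2 * S k) := by
      apply mul_le_mul_of_nonneg_left _ hm.le
      linarith
    have h6 : (M:ℝ)/2 * Rf (k+1) ≤ 1/2 * S k + ((M:ℝ)-1)/2 * Rf k := by
      have := mul_le_mul_of_nonneg_left h3 (by positivity : (0:ℝ) ≤ (M:ℝ)/2)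
      have he : (M:ℝ)/2 * ((1/(M:ℝ)) * S k + (((M:ℝ)-1)/(M:ℝ)) * Rf k)
          = 1/2 * S k + ((M:ℝ)-1)/2 * Rf k := by
        field_simp
      linarith
    rw [hΔ, hΔ]
    nlinarith [h4, h5, h6]
  -- telescoping
  have hsum : ∀ k : ℕ, (M:ℝ) * Δ k + (M:ℝ)/2 * Rf k + (k:ℝ) * Δ k
      ≤ (M:ℝ) * Δ 0 + (M:ℝ)/2 * Rf 0 := by
    intro k
    induction k with
    | zero => simp
    | succ k ih =>
      have h1 := hE k
      have h2 := hmono k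
      have h3 : ((k:ℝ)+1) * Δ (k+1) ≤ ((k:ℝ)+1) * Δ k :=
        mul_le_mul_of_nonneg_left h2 (by positivity)
      push_cast
      push_cast at ih
      linarith
  -- conclusion
  intro k
  have hRnn : 0 ≤ Rf k := by
    rw [hRf]
    apply Finset.sum_nonneg
    intro i _
    exact mul_nonneg (hL i).le (by positivity)
  have hkey : ((M:ℝ) + (k:ℝ)) * Δ k ≤ (M:ℝ) * Δ 0 + (M:ℝ)/2 * Rf 0 := by
    have h1 := hsum k
    have h2 : 0 ≤ (M:ℝ)/2 * Rf k := by positivity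
    nlinarith
  have hnorm : norm1Sq L (u 0 - ustar) = Rf 0 := by
    rw [norm1Sq, hRf]
    exact Finset.sum_congr rfl fun i _ => by rw [PiLp.sub_apply]
  have hpos : (0:ℝ) < (M:ℝ) + (k:ℝ) := by positivity
  rw [hnorm, div_mul_eq_mul_div, le_div_iff₀ hpos, ← hΔ]
  have hΔ0 := hΔ 0
  nlinarith [hkey]
end

section
/- If u_k ≠ u_* (where u_* is the unique minimizer of a strictly convex f over U) and u_k is feasible, then at least one block satisfies v̄ⁱ(u_k) ≠ uⁱ_k, and consequently the PCDM iteration strictly decreases the objective: f(u_{k+1}) < f(u_k). -/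
open scoped RealInnerProductSpace

open scoped Topology
open InnerProductSpace


lemma convex_grad_ineq {E : Type*} [NormedAddCommGroup E] [InnerProductSpace ℝ E]
    [CompleteSpace E] (f : E → ℝ) (hc : ConvexOn ℝ Set.univ f)
    (hf : Differentiable ℝ f) (x y : E) :
    f x + ⟪gradient f x, y - x⟫ ≤ f y := by
  set d : ℝ := ⟪gradient f x, y - x⟫ with hd
  have hcurve : ∀ t : ℝ, HasDerivAt (fun t : ℝ => x + t • (y - x)) (y - x) t := by
    intro t
    simpa using ((hasDerivAt_id t).smul_const (y - x)).const_add x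
  have hg : HasDerivAt (fun t : ℝ => f (x + t • (y - x))) d 0 := by
    have h1 : HasFDerivAt f (fderiv ℝ f x) (x + (0:ℝ) • (y - x)) := by
      simpa using (hf x).hasFDerivAt
    have := h1.comp_hasDerivAt 0 (hcurve 0)
    have hdval : fderiv ℝ f x (y - x) = d := by
      rw [hd, gradient, toDual_symm_apply]
    rw [← hdval]; exact this
  have hslope : ∀ t : ℝ, t ∈ Set.Ioc (0:ℝ) 1 →
      slope (fun t : ℝ => f (x + t • (y - x))) 0 t ≤ f y - f x := by
    intro t ht
    have hco := hc.2 (Set.mem_univ x) (Set.mem_univ y) (by linarith [ht.1, ht.2] : (0:ℝ) ≤ 1 - t)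
      (le_of_lt ht.1) (by ring)
    have hxt : x + t • (y - x) = (1 - t) • x + t • y := by
      rw [smul_sub]; module
    rw [slope_def_field, div_le_iff₀ (by linarith [ht.1] : (0:ℝ) < t - 0)]
    have h0 : x + (0:ℝ) • (y - x) = x := by simp
    rw [hxt, h0]
    have h2 : f ((1-t) • x + t • y) ≤ (1-t) * f x + t * f y := by simpa using hco
    nlinarith [ht.1]
  have htend : Filter.Tendsto (slope (fun t : ℝ => f (x + t • (y - x))) 0) (𝓝[>] 0) (𝓝 d) :=
    (hasDerivAt_iff_tendsto_slope.mp hg).mono_left (nhdsWithin_mono _ (by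
      intro z hz; exact ne_of_gt hz))
  have : d ≤ f y - f x := by
    refine le_of_tendsto htend ?_
    filter_upwards [Ioc_mem_nhdsGT_of_mem (by norm_num : (0:ℝ) ∈ Set.Ico (0:ℝ) 1)] with t ht
    exact hslope t ht
  linarith

lemma piLp_sum_apply_s18 {ι κ : Type*} {α : ι → Type*} [∀ i, AddCommGroup (α i)]
    (s : Finset κ) (g : κ → PiLp 2 α) (j : ι) :
    (∑ k ∈ s, g k) j = ∑ k ∈ s, g k j := by
  classical
  induction s using Finset.cons_induction with
  | empty => rfl
  | cons a s ha ih => rw [Finset.sum_cons, Finset.sum_cons, ← ih]; rfl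

set_option maxHeartbeats 1000000 in
/-- away from the unique minimizer, some block update is nontrivial and
the PCDM iteration strictly decreases the objective. -/
theorem pcdm_strict_decrease {M : ℕ} {n : Fin M → ℕ} (hM : 0 < M)
    (f : FullSpace M n → ℝ)
    (hstrict : StrictConvexOn ℝ Set.univ f) (hf : Differentiable ℝ f)
    (L : Fin M → ℝ) (hL : ∀ i, 0 < L i)
    (hdesc : ∀ (i : Fin M) (u : FullSpace M n) (h : EuclideanSpace ℝ (Fin (n i))),
      f (u + blockEmb i h) ≤ f u + ⟪gradient f u i, h⟫ + L i / 2 * ‖h‖ ^ 2)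
    (U : (i : Fin M) → Set (EuclideanSpace ℝ (Fin (n i))))
    (hUclosed : ∀ i, IsClosed (U i)) (hUconvex : ∀ i, Convex ℝ (U i))
    (ustar : FullSpace M n) (hstarU : ∀ i, ustar i ∈ U i)
    (hstarmin : ∀ w : FullSpace M n, (∀ i, w i ∈ U i) → w ≠ ustar → f ustar < f w)
    (uk : FullSpace M n) (hukU : ∀ i, uk i ∈ U i) (hne : uk ≠ ustar)
    (vbar : (i : Fin M) → EuclideanSpace ℝ (Fin (n i)))
    (hvbarU : ∀ i, vbar i ∈ U i)
    (hmin : ∀ i, ∀ v ∈ U i,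
      ⟪gradient f uk i, vbar i - uk i⟫ + L i / 2 * ‖vbar i - uk i‖ ^ 2 ≤
        ⟪gradient f uk i, v - uk i⟫ + L i / 2 * ‖v - uk i‖ ^ 2)
    (uk1 : FullSpace M n)
    (hupd : ∀ i, uk1 i = (1 / (M : ℝ)) • vbar i + (((M : ℝ) - 1) / (M : ℝ)) • uk i) :
    (∃ i, vbar i ≠ uk i) ∧ f uk1 < f uk := by
  have hMpos : (0:ℝ) < M := by exact_mod_cast hM
  set q : Fin M → ℝ := fun i =>
    ⟪gradient f uk i, vbar i - uk i⟫ + L i / 2 * ‖vbar i - uk i‖ ^ 2 with hq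
  have hqle : ∀ i, q i ≤ 0 := by
    intro i
    have := hmin i (uk i) (hukU i)
    simpa using this
  have hqlt : ∀ i, vbar i ≠ uk i → q i < 0 := by
    intro i hne'
    set m := (1/2 : ℝ) • vbar i + (1/2 : ℝ) • uk i with hm
    have hmU : m ∈ U i := hUconvex i (hvbarU i) (hukU i) (by norm_num) (by norm_num) (by norm_num)
    have hmd : m - uk i = (1/2 : ℝ) • (vbar i - uk i) := by
      rw [hm, smul_sub]; module
    have key := hmin i m hmU
    rw [hmd, real_inner_smul_right, norm_smul] at key
    have hhalf : ‖(1/2 : ℝ)‖ = 1/2 := by norm_num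
    rw [hhalf] at key
    have hs : (0:ℝ) < ‖vbar i - uk i‖ ^ 2 :=
      pow_pos (norm_pos_iff.mpr (sub_ne_zero.mpr hne')) 2
    have hLi := hL i
    rw [hq]
    nlinarith [key, hs, hLi]
  have hex : ∃ i, vbar i ≠ uk i := by
    by_contra hcon
    push_neg at hcon
    have hfo : ∀ i, ∀ v ∈ U i, 0 ≤ ⟪gradient f uk i, v - uk i⟫ := by
      intro i v hv
      set a : ℝ := ⟪gradient f uk i, v - uk i⟫ with ha
      set b : ℝ := L i / 2 * ‖v - uk i‖ ^ 2 with hb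
      have hbnn : 0 ≤ b := by
        rw [hb]
        have : (0:ℝ) ≤ L i / 2 := by linarith [hL i]
        exact mul_nonneg this (by positivity)
      by_contra hneg
      push_neg at hneg
      set t : ℝ := min 1 (-a / (2 * (b + 1))) with htdef
      have ht0 : 0 < t := by
        apply lt_min one_pos
        apply div_pos (by linarith) (by linarith)
      have ht1 : t ≤ 1 := min_le_left _ _
      have htle : t * (b + 1) ≤ -a / 2 := by
        have h := min_le_right 1 (-a / (2 * (b + 1)))
        rw [le_div_iff₀ (by linarith : (0:ℝ) < 2 * (b+1))] at h
        rw [htdef]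
        nlinarith [h]
      have hpU : (1 - t) • uk i + t • v ∈ U i :=
        hUconvex i (hukU i) hv (by linarith) (le_of_lt ht0) (by ring)
      have hkey := hmin i _ hpU
      have hpd : ((1 - t) • uk i + t • v) - uk i = t • (v - uk i) := by
        rw [smul_sub]; module
      rw [hcon i, hpd, real_inner_smul_right, norm_smul, Real.norm_eq_abs,
        abs_of_pos ht0] at hkey
      simp only [sub_self, inner_zero_right, norm_zero] at hkey
      have hb2 : L i / 2 * (t * ‖v - uk i‖) ^ 2 = t ^ 2 * b := by rw [hb]; ring
      rw [hb2, ← ha] at hkey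
      have hta : 0 < t * (-a) := mul_pos ht0 (by linarith)
      nlinarith [mul_le_mul_of_nonneg_left htle ht0.le, hkey, hta, pow_pos ht0 2]
    have hgrad : 0 ≤ ⟪gradient f uk, ustar - uk⟫ := by
      rw [PiLp.inner_apply]
      apply Finset.sum_nonneg
      intro i _
      have := hfo i (ustar i) (hstarU i)
      simpa [PiLp.sub_apply] using this
    have h1 := convex_grad_ineq f hstrict.convexOn hf uk ustar
    have h2 := hstarmin uk hukU hne
    linarith
  refine ⟨hex, ?_⟩
  obtain ⟨i0, hi0⟩ := hex
  set ubar : Fin M → FullSpace M n := fun i => uk + blockEmb i (vbar i - uk i) with hubar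
  have hub : ∀ i, f (ubar i) ≤ f uk + q i := by
    intro i
    have := hdesc i uk (vbar i - uk i)
    rw [hubar, hq]
    dsimp only
    linarith
  have hsum : uk1 = ∑ i, ((M:ℝ))⁻¹ • ubar i := by
    refine PiLp.ext fun j => ?_
    rw [piLp_sum_apply_s18]
    have hval : ∀ i, (((M:ℝ))⁻¹ • ubar i) j
        = (M:ℝ)⁻¹ • (uk j + Pi.single (M := fun i => EuclideanSpace ℝ (Fin (n i))) i (vbar i - uk i) j) := fun i => rfl
    simp_rw [hval]
    have hsing : ∑ i, (M:ℝ)⁻¹ • (uk j + Pi.single (M := fun i => EuclideanSpace ℝ (Fin (n i))) i (vbar i - uk i) j)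
        = (M:ℝ)⁻¹ • ((M:ℝ) • uk j + (vbar j - uk j)) := by
      rw [← Finset.smul_sum]
      congr 1
      rw [Finset.sum_add_distrib, Finset.sum_const, Finset.card_univ, Fintype.card_fin,
        ← Nat.cast_smul_eq_nsmul ℝ]
      congr 1
      rw [Finset.sum_eq_single_of_mem j (Finset.mem_univ j)]
      · simp
      · intro i _ hij
        exact Pi.single_eq_of_ne (Ne.symm hij) _
    rw [hsing, hupd j]
    match_scalars <;> (field_simp; try ring)
  have hjen : f uk1 ≤ ∑ i, ((M:ℝ))⁻¹ * f (ubar i) := by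
    rw [hsum]
    apply hstrict.convexOn.map_sum_le
    · intro i _; positivity
    · rw [Finset.sum_const, Finset.card_univ, Fintype.card_fin, nsmul_eq_mul]
      field_simp
    · intro i _; exact Set.mem_univ _
  have hMi : (0:ℝ) < (M:ℝ)⁻¹ := by positivity
  have hstrictsum : ∑ i, ((M:ℝ))⁻¹ * f (ubar i) < f uk := by
    have hlt : ∑ i, ((M:ℝ))⁻¹ * f (ubar i) < ∑ _i : Fin M, ((M:ℝ))⁻¹ * f uk := by
      apply Finset.sum_lt_sum
      · intro i _
        have h1 := hub i
        have h2 := hqle i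
        nlinarith
      · refine ⟨i0, Finset.mem_univ i0, ?_⟩
        have h1 := hub i0
        have h2 := hqlt i0 hi0
        nlinarith
    have heq : ∑ _i : Fin M, ((M:ℝ))⁻¹ * f uk = f uk := by
      rw [Finset.sum_const, Finset.card_univ, Fintype.card_fin, nsmul_eq_mul]
      field_simp
    linarith
  linarith
end

section
/- Consider the recursion a_{k+1} + (1/M)Σ_{j=0}^{k}(f_j − f*) ≤ a₀ for a descent sequence f_k (f_{k+1} ≤ f_k and f_k ≥ f*), where a_k = (1/2)r_k² + f_k − f* ≥ f_k − f*. Then f_k − f* ≤ (M/(M+k))·a₀ for all k ≥ 0. -/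
/-- the final summation argument of the sublinear-rate theorem, isolated
as a real-sequence lemma. -/
theorem pcdm_summation_lemma (M : ℕ) (hM : 1 ≤ M)
    (f : ℕ → ℝ) (fstar : ℝ) (hmono : ∀ k, f (k + 1) ≤ f k) (hlb : ∀ k, fstar ≤ f k)
    (r : ℕ → ℝ) (hr : ∀ k, 0 ≤ r k)
    (a : ℕ → ℝ) (ha : ∀ k, a k = 1 / 2 * r k ^ 2 + f k - fstar)
    (hrec : ∀ k, a (k + 1) + (1 / (M : ℝ)) * ∑ j ∈ Finset.range (k + 1), (f j - fstar)
      ≤ a 0) :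
    ∀ k : ℕ, f k - fstar ≤ (M : ℝ) / ((M : ℝ) + (k : ℝ)) * a 0 := by
  have hMpos : (0 : ℝ) < M := by exact_mod_cast hM
  have hamono : ∀ j k, j ≤ k → f k ≤ f j := by
    intro j k h
    induction k with
    | zero => simp_all
    | succ n ih =>
      rcases Nat.lt_or_ge j (n+1) with h' | h'
      · exact le_trans (hmono n) (ih (Nat.lt_succ_iff.mp h'))
      · have : j = n + 1 := le_antisymm h h'
        simp [this]
  have hak : ∀ k, f k - fstar ≤ a k := by
    intro k
    rw [ha k]
    nlinarith [sq_nonneg (r k)]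
  intro k
  cases k with
  | zero =>
    have : (M : ℝ) / ((M : ℝ) + 0) * a 0 = a 0 := by
      field_simp
      ring
    rw [Nat.cast_zero, this]
    exact hak 0
  | succ m =>
    have hsum : ((m : ℝ) + 1) * (f (m+1) - fstar) ≤
        ∑ j ∈ Finset.range (m + 1), (f j - fstar) := by
      have : ∀ j ∈ Finset.range (m+1), f (m+1) - fstar ≤ f j - fstar := by
        intro j hj
        have := hamono j (m+1) (le_of_lt (Finset.mem_range.mp hj))
        linarith
      calc ((m : ℝ) + 1) * (f (m+1) - fstar)
          = ∑ _j ∈ Finset.range (m+1), (f (m+1) - fstar) := by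
            rw [Finset.sum_const, Finset.card_range]; push_cast; ring
        _ ≤ _ := Finset.sum_le_sum this
    have h1 := hrec m
    have h2 := hak (m+1)
    have hd : 0 ≤ f (m+1) - fstar := by linarith [hlb (m+1)]
    have key : (1 + ((m : ℝ) + 1) / M) * (f (m+1) - fstar) ≤ a 0 := by
      have : (1 / (M : ℝ)) * (((m : ℝ) + 1) * (f (m+1) - fstar)) ≤
          (1 / (M : ℝ)) * ∑ j ∈ Finset.range (m + 1), (f j - fstar) := by
        apply mul_le_mul_of_nonneg_left hsum
        positivity
      calc (1 + ((m : ℝ) + 1) / M) * (f (m+1) - fstar)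
          = (f (m+1) - fstar) + (1 / (M : ℝ)) * (((m : ℝ) + 1) * (f (m+1) - fstar)) := by
            ring
        _ ≤ a (m+1) + (1 / (M : ℝ)) * ∑ j ∈ Finset.range (m + 1), (f j - fstar) := by
            linarith
        _ ≤ a 0 := h1
    have hden : (0 : ℝ) < (M : ℝ) + ((m : ℕ) + 1 : ℕ) := by positivity
    push_cast
    rw [div_mul_eq_mul_div, le_div_iff₀ (by positivity)]
    have : (f (m+1) - fstar) * ((M : ℝ) + ((m : ℝ) + 1)) =
        (M : ℝ) * ((1 + ((m : ℝ) + 1) / M) * (f (m+1) - fstar)) := by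
      field_simp
    rw [this]
    have := mul_le_mul_of_nonneg_left key (le_of_lt hMpos)
    linarith
end
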